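/- Let n ∈ ℕ, ℓ ∈ ℤ, and let H : ℝ → ℝ be a smooth function satisfying H(z+1) = H(z) + ℓ for all z ∈ ℝ. Then the diffeomorphism F of ℝ³ defined by F(x,y,z) = (x + n(1/2 − z)·H(z) + (nℓ/2)·z², y − H(z), z) normalizes the group Γ_n, i.e. F·Γ_n·F⁻¹ = Γ_n. -/

import Mathlib

noncomputable section

/-- The bijection `(x,y,z) ↦ (x + φ(y,z), y + ψ(z), z + b)` of `ℝ³`. -/
def affMap (φ : ℝ × ℝ → ℝ) (ψ : ℝ → ℝ) (b : ℝ) : Equiv.Perm (ℝ × ℝ × ℝ) where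
  toFun p := (p.1 + φ p.2, p.2.1 + ψ p.2.2, p.2.2 + b)
  invFun p := (p.1 - φ (p.2.1 - ψ (p.2.2 - b), p.2.2 - b), p.2.1 - ψ (p.2.2 - b), p.2.2 - b)
  left_inv := by rintro ⟨x, y, z⟩; simp
  right_inv := by rintro ⟨x, y, z⟩; simp

/-- The group `Γ_{n,c₁,c₂}`, generated by `(x,y,z) ↦ (x+1,y,z)`,
`(x,y,z) ↦ (x+c₁,y+1,z)` and `(x,y,z) ↦ (x+ny+c₂,y,z+1)`. -/
def Gamma (n : ℕ) (c₁ c₂ : ℝ) : Subgroup (Equiv.Perm (ℝ × ℝ × ℝ)) :=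
  Subgroup.closure
    { affMap (fun _ => 1) (fun _ => 0) 0,
      affMap (fun _ => c₁) (fun _ => 1) 0,
      affMap (fun q => n * q.1 + c₂) (fun _ => 0) 1 }

lemma affMap_apply (φ : ℝ × ℝ → ℝ) (ψ : ℝ → ℝ) (b : ℝ) (p : ℝ × ℝ × ℝ) :
    affMap φ ψ b p = (p.1 + φ p.2, p.2.1 + ψ p.2.2, p.2.2 + b) := rfl

lemma affMap_const_mul (r s : ℝ) :
    affMap (fun _ => (0:ℝ)) (fun _ => r) 0 * affMap (fun _ => (0:ℝ)) (fun _ => s) 0 =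
      affMap (fun _ => (0:ℝ)) (fun _ => r + s) 0 := by
  apply Equiv.ext; rintro ⟨x, y, z⟩
  simp [affMap_apply, add_assoc, add_comm s r]

lemma affMap_zero_eq_one :
    affMap (fun _ => (0:ℝ)) (fun _ => (0:ℝ)) 0 = 1 := by
  apply Equiv.ext; rintro ⟨x, y, z⟩
  simp [affMap_apply]

lemma affMap_const_inv (r : ℝ) :
    (affMap (fun _ => (0:ℝ)) (fun _ => r) 0)⁻¹ = affMap (fun _ => (0:ℝ)) (fun _ => -r) 0 := by
  apply inv_eq_of_mul_eq_one_right
  rw [affMap_const_mul, add_neg_cancel, affMap_zero_eq_one]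

lemma const_mem (n : ℕ) (k : ℤ) :
    affMap (fun _ => (0:ℝ)) (fun _ => (k : ℝ)) 0 ∈ Gamma n 0 0 := by
  have hb : affMap (fun _ => (0:ℝ)) (fun _ => (1:ℝ)) 0 ∈ Gamma n 0 0 :=
    Subgroup.subset_closure (by simp)
  induction k using Int.induction_on with
  | zero => simpa [affMap_zero_eq_one] using one_mem (Gamma n 0 0)
  | succ k ih =>
      have : (fun _ : ℝ => ((k + 1 : ℤ) : ℝ)) = fun _ : ℝ => (1:ℝ) + (k:ℝ) := by
        funext; push_cast; ring
      rw [this, ← affMap_const_mul]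
      exact mul_mem hb ih
  | pred k ih =>
      have : (fun _ : ℝ => ((-k - 1 : ℤ) : ℝ)) = fun _ : ℝ => (-1:ℝ) + ((-k : ℤ):ℝ) := by
        funext; push_cast; ring
      rw [this, ← affMap_const_mul, ← affMap_const_inv]
      exact mul_mem (inv_mem hb) ih

lemma conj_closure_mem (g : Equiv.Perm (ℝ × ℝ × ℝ)) (n : ℕ)
    (hgen : ∀ s ∈ ({ affMap (fun _ => 1) (fun _ => 0) 0,
      affMap (fun _ => (0:ℝ)) (fun _ => 1) 0,
      affMap (fun q => n * q.1 + 0) (fun _ => 0) 1 } : Set (Equiv.Perm (ℝ × ℝ × ℝ))),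
      g * s * g⁻¹ ∈ Gamma n 0 0) :
    ∀ h ∈ Gamma n 0 0, g * h * g⁻¹ ∈ Gamma n 0 0 := by
  intro h hh
  refine Subgroup.closure_induction (fun x hx => hgen x hx) ?_ ?_ ?_ hh
  · simpa using one_mem (Gamma n 0 0)
  · intro x y _ _ hx hy
    have : g * (x * y) * g⁻¹ = (g * x * g⁻¹) * (g * y * g⁻¹) := by group
    rw [this]; exact mul_mem hx hy
  · intro x _ hx
    have : g * x⁻¹ * g⁻¹ = (g * x * g⁻¹)⁻¹ := by group
    rw [this]; exact inv_mem hx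

/-- For `ℓ ∈ ℤ` and a smooth `H : ℝ → ℝ` with `H(z+1) = H(z) + ℓ`, the diffeomorphism
`F(x,y,z) = (x + n(1/2 − z)H(z) + (nℓ/2)z², y − H(z), z)` normalizes `Γ_n = Γ_{n,0,0}`. -/
theorem stmt_11 (n : ℕ) (ℓ : ℤ) (H : ℝ → ℝ) (hH : ContDiff ℝ (⊤ : ℕ∞) H)
    (hHper : ∀ z : ℝ, H (z + 1) = H z + ℓ) :
    affMap (fun w => (n : ℝ) * (1 / 2 - w.2) * H w.2 + ((n : ℝ) * (ℓ : ℝ) / 2) * w.2 ^ 2)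
        (fun z => -(H z)) 0 ∈ Subgroup.normalizer ((Gamma n 0 0 : Subgroup (Equiv.Perm (ℝ × ℝ × ℝ))) : Set (Equiv.Perm (ℝ × ℝ × ℝ))) := by
  set F := affMap (fun w => (n : ℝ) * (1 / 2 - w.2) * H w.2 + ((n : ℝ) * (ℓ : ℝ) / 2) * w.2 ^ 2)
      (fun z => -(H z)) 0 with hF
  set a := affMap (fun _ => (1:ℝ)) (fun _ => 0) 0 with ha
  set b := affMap (fun _ => (0:ℝ)) (fun _ => 1) 0 with hb
  set c := affMap (fun q => (n:ℝ) * q.1 + 0) (fun _ => 0) 1 with hc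
  have hGam : Gamma n 0 0 = Subgroup.closure {a, b, c} := rfl
  have hmem_a : a ∈ Gamma n 0 0 := Subgroup.subset_closure (Or.inl rfl)
  have hmem_b : b ∈ Gamma n 0 0 := Subgroup.subset_closure (Or.inr (Or.inl rfl))
  have hmem_c : c ∈ Gamma n 0 0 := Subgroup.subset_closure (Or.inr (Or.inr rfl))
  -- F commutes with a
  have h1 : F * a = a * F := by
    apply Equiv.ext; rintro ⟨x, y, z⟩
    simp [hF, ha, affMap_apply]
    ring
  -- F commutes with b
  have h2 : F * b = b * F := by
    apply Equiv.ext; rintro ⟨x, y, z⟩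
    simp [hF, hb, affMap_apply]
    ring
  -- F * c = Bneg * c * F
  have h3 : F * c = affMap (fun _ => (0:ℝ)) (fun _ => ((-ℓ : ℤ) : ℝ)) 0 * c * F := by
    apply Equiv.ext; rintro ⟨x, y, z⟩
    simp only [hF, hc, Equiv.Perm.coe_mul, Function.comp_apply, affMap_apply, Prod.mk.injEq,
      add_zero]
    refine ⟨?_, ?_, trivial⟩ <;> rw [hHper z] <;> push_cast <;> ring
  -- c * F = F * (Bpos * c)
  have h4 : c * F = F * (affMap (fun _ => (0:ℝ)) (fun _ => ((ℓ : ℤ) : ℝ)) 0 * c) := by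
    apply Equiv.ext; rintro ⟨x, y, z⟩
    simp only [hF, hc, Equiv.Perm.coe_mul, Function.comp_apply, affMap_apply, Prod.mk.injEq,
      add_zero]
    refine ⟨?_, ?_, trivial⟩ <;> rw [hHper z] <;> push_cast <;> ring
  have hfwd : ∀ h ∈ Gamma n 0 0, F * h * F⁻¹ ∈ Gamma n 0 0 := by
    apply conj_closure_mem
    rintro s hs
    simp only [Set.mem_insert_iff, Set.mem_singleton_iff] at hs
    rcases hs with rfl | rfl | rfl
    · rw [show F * affMap (fun _ => (1:ℝ)) (fun _ => 0) 0 * F⁻¹ = a by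
        rw [← ha, h1]; group]
      exact hmem_a
    · rw [show F * affMap (fun _ => (0:ℝ)) (fun _ => 1) 0 * F⁻¹ = b by
        rw [← hb, h2]; group]
      exact hmem_b
    · rw [show F * affMap (fun q => (n:ℝ) * q.1 + 0) (fun _ => 0) 1 * F⁻¹ =
          affMap (fun _ => (0:ℝ)) (fun _ => ((-ℓ : ℤ) : ℝ)) 0 * c by
        rw [← hc, h3]; group]
      exact mul_mem (const_mem n (-ℓ)) hmem_c
  have hbwd : ∀ h ∈ Gamma n 0 0, F⁻¹ * h * F ∈ Gamma n 0 0 := by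
    have := conj_closure_mem F⁻¹ n ?_
    · simpa using this
    rintro s hs
    simp only [Set.mem_insert_iff, Set.mem_singleton_iff] at hs
    rcases hs with rfl | rfl | rfl
    · rw [show F⁻¹ * affMap (fun _ => (1:ℝ)) (fun _ => 0) 0 * F⁻¹⁻¹ = a by
        rw [← ha, inv_inv]
        have : a * F = F * a := h1.symm
        rw [mul_assoc, this]; group]
      exact hmem_a
    · rw [show F⁻¹ * affMap (fun _ => (0:ℝ)) (fun _ => 1) 0 * F⁻¹⁻¹ = b by
        rw [← hb, inv_inv]
        have : b * F = F * b := h2.symm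
        rw [mul_assoc, this]; group]
      exact hmem_b
    · rw [show F⁻¹ * affMap (fun q => (n:ℝ) * q.1 + 0) (fun _ => 0) 1 * F⁻¹⁻¹ =
          affMap (fun _ => (0:ℝ)) (fun _ => ((ℓ : ℤ) : ℝ)) 0 * c by
        rw [← hc, inv_inv, mul_assoc, h4]; group]
      exact mul_mem (const_mem n ℓ) hmem_c
  rw [Subgroup.mem_normalizer_iff]
  intro h
  constructor
  · exact hfwd h
  · intro hh
    have := hbwd _ hh
    simpa [mul_assoc] using this
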